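/- Let M, a ∈ ℝ and m ∈ ℤ. Define the operator D on functions g : ℝ → ℂ by (Dg)(r) = g′(r) + (2·i·a·m/Δ(r))·g(r) wherever Δ(r) ≠ 0 (this is e^{−imφ₊}·∂_{r_out}(e^{imφ₊}·g) in outgoing Eddington–Finkelstein variables). Then for every r with Δ(r) ≠ 0, applying D four times to the function g₀(r) = Δ(r)² yields Δ(r)²·(D(D(D(D g₀))))(r) = 24·A_m(r). -/

import Mathlib

noncomputable section

/-- `Δ(r) = r² − 2Mr + a²`. -/
def Δk (M a r : ℝ) : ℝ := r^2 - 2*M*r + a^2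

/-- The polynomial `A_m(r)` governing the leading-order asymptotics of the spin `+2`
Teukolsky field. -/
def Am (M a : ℝ) (m : ℤ) (r : ℝ) : ℂ :=
  (1/3 : ℂ) * (3 * ((Δk M a r : ℝ) : ℂ)^2
    + Complex.I * (a : ℂ) * (m : ℂ) * ((r : ℂ) - (M : ℂ)) *
        (4 * ((a : ℂ)^2 - (M : ℂ)^2) + 6 * ((Δk M a r : ℝ) : ℂ))
    - (a : ℂ)^2 * (m : ℂ)^2 *
        (2 * ((Δk M a r : ℝ) : ℂ) + 6 * ((a : ℂ)^2 - (M : ℂ)^2)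
          + 4 * ((r : ℂ) - (M : ℂ))^2)
    - 4 * Complex.I * (a : ℂ)^3 * (m : ℂ)^3 * ((r : ℂ) - (M : ℂ))
    + 2 * (a : ℂ)^4 * (m : ℂ)^4)

/-- The operator `D g = g′ + (2iam/Δ)·g`, i.e. `e^{−imφ₊}·∂_{r_out}(e^{imφ₊}·g)`. -/
def Dop (M a : ℝ) (m : ℤ) (g : ℝ → ℂ) : ℝ → ℂ := fun r =>
  deriv g r + (2 * Complex.I * (a : ℂ) * (m : ℂ)/((Δk M a r : ℝ) : ℂ)) * g r

namespace T14

def Dl (M a : ℝ) (x : ℝ) : ℂ := ((Δk M a x : ℝ) : ℂ)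
def Cc (a : ℝ) (m : ℤ) : ℂ := 2 * Complex.I * (a : ℂ) * (m : ℂ)

def F1 (M a : ℝ) (m : ℤ) (x : ℝ) : ℂ :=
  2 * Dl M a x * (2*(x:ℂ)-2*M) + Cc a m * Dl M a x
def F2 (M a : ℝ) (m : ℤ) (x : ℝ) : ℂ :=
  2*(2*(x:ℂ)-2*M)^2 + 4*Dl M a x + 3*Cc a m*(2*(x:ℂ)-2*M) + (Cc a m)^2
def F3 (M a : ℝ) (m : ℤ) (x : ℝ) : ℂ :=
  12*(2*(x:ℂ)-2*M) + 6*Cc a m + Cc a m * F2 M a m x / Dl M a x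

lemma Dop_apply (M a : ℝ) (m : ℤ) (g : ℝ → ℂ) (x : ℝ) :
    Dop M a m g x = deriv g x + (Cc a m / Dl M a x) * g x := rfl

lemma hasDerivAt_coe (r : ℝ) : HasDerivAt (fun x : ℝ => (x : ℂ)) 1 r := by
  simpa using (hasDerivAt_id ((r : ℝ) : ℂ)).comp_ofReal

lemma hasDerivAt_lin (M : ℝ) (r : ℝ) :
    HasDerivAt (fun x : ℝ => 2*(x:ℂ)-2*(M:ℂ)) 2 r := by
  simpa using ((hasDerivAt_coe r).const_mul (2:ℂ)).sub_const (2*(M:ℂ))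

lemma hasDerivAt_Dl (M a : ℝ) (r : ℝ) :
    HasDerivAt (Dl M a) (2*(r:ℂ) - 2*M) r := by
  have h1 := hasDerivAt_coe r
  have hp : HasDerivAt (fun x : ℝ => (x:ℂ)^2) (2*(r:ℂ)) r := by
    have := h1.mul h1
    convert this using 1
    · rfl
    · funext y; show _ = (y:ℂ) * y; ring
    · ring
  have hm := h1.const_mul (2*(M:ℂ))
  have h := (hp.sub hm).add_const ((a:ℂ)^2)
  have hfun : Dl M a = fun x : ℝ => (x:ℂ)^2 - 2*(M:ℂ)*(x:ℂ) + (a:ℂ)^2 := by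
    funext x
    simp only [Dl, Δk]
    push_cast
    ring
  rw [hfun]
  convert h using 1
  rfl
  rfl
  ring

lemma isOpen_ne (M a : ℝ) : IsOpen {x : ℝ | Δk M a x ≠ 0} := by
  have hcont : Continuous fun x : ℝ => Δk M a x := by
    unfold Δk; continuity
  exact isOpen_compl_singleton.preimage hcont

lemma hasDerivAt_F0 (M a : ℝ) (x : ℝ) :
    HasDerivAt (fun y : ℝ => ((Δk M a y : ℝ):ℂ)^2) (2*Dl M a x*(2*(x:ℂ)-2*M)) x := by
  have hd := hasDerivAt_Dl M a x
  have := hd.mul hd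
  convert this using 1
  · rfl
  · funext y; simp only [Dl, Pi.mul_apply]; ring
  · simp only [Dl]; ring

lemma hasDerivAt_F1 (M a : ℝ) (m : ℤ) (r : ℝ) :
    HasDerivAt (F1 M a m)
      (2*(2*(r:ℂ)-2*M)^2 + 4*Dl M a r + Cc a m*(2*(r:ℂ)-2*M)) r := by
  have hd := hasDerivAt_Dl M a r
  have hl := hasDerivAt_lin M r
  have h := ((hd.const_mul (2:ℂ)).mul hl).add (hd.const_mul (Cc a m))
  have hfun : F1 M a m = fun x : ℝ =>
      (fun y : ℝ => 2 * Dl M a y) x * (fun y : ℝ => 2*(y:ℂ)-2*(M:ℂ)) x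
        + Cc a m * Dl M a x := by
    funext x; simp only [F1]
  rw [hfun]
  convert h using 1
  rfl
  rfl
  ring

lemma hasDerivAt_F2 (M a : ℝ) (m : ℤ) (r : ℝ) :
    HasDerivAt (F2 M a m) (12*(2*(r:ℂ)-2*M) + 6*Cc a m) r := by
  have hd := hasDerivAt_Dl M a r
  have hl := hasDerivAt_lin M r
  have h := ((((hl.mul hl).const_mul (2:ℂ)).add (hd.const_mul (4:ℂ))).add
      (hl.const_mul (3*Cc a m))).add_const ((Cc a m)^2)
  have hfun : F2 M a m = fun x : ℝ =>
      (2 * ((fun y : ℝ => 2*(y:ℂ)-2*(M:ℂ)) x * (fun y : ℝ => 2*(y:ℂ)-2*(M:ℂ)) x)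
        + 4 * Dl M a x + 3*Cc a m * (2*(x:ℂ)-2*M)) + (Cc a m)^2 := by
    funext x; simp only [F2]; ring
  rw [hfun]
  convert h using 1
  rfl
  rfl
  ring

lemma hasDerivAt_F3 (M a : ℝ) (m : ℤ) (r : ℝ) (hr : Δk M a r ≠ 0) :
    HasDerivAt (F3 M a m)
      (24 + (Cc a m * (12*(2*(r:ℂ)-2*M) + 6*Cc a m) * Dl M a r
        - Cc a m * F2 M a m r * (2*(r:ℂ)-2*M)) / (Dl M a r)^2) r := by
  have hne : Dl M a r ≠ 0 := Complex.ofReal_ne_zero.mpr hr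
  have hd := hasDerivAt_Dl M a r
  have hl := hasDerivAt_lin M r
  have hq := ((hasDerivAt_F2 M a m r).const_mul (Cc a m)).div hd hne
  have h := ((hl.const_mul (12:ℂ)).add_const (6*Cc a m)).add hq
  have hfun : F3 M a m = fun x : ℝ =>
      (12 * (2*(x:ℂ)-2*(M:ℂ)) + 6*Cc a m) + Cc a m * F2 M a m x / Dl M a x := by
    funext x; simp only [F3]
  rw [hfun]
  convert h using 1
  rfl
  rfl
  ring

lemma step1 (M a : ℝ) (m : ℤ) (x : ℝ) (hx : Δk M a x ≠ 0) :
    Dop M a m (fun y => ((Δk M a y : ℝ) : ℂ)^2) x = F1 M a m x := by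
  have hne : Dl M a x ≠ 0 := Complex.ofReal_ne_zero.mpr hx
  rw [Dop_apply, (hasDerivAt_F0 M a x).deriv]
  simp only [Dl] at hne
  simp only [F1, Dl]
  field_simp

lemma step2 (M a : ℝ) (m : ℤ) (x : ℝ) (hx : Δk M a x ≠ 0) :
    Dop M a m (Dop M a m (fun y => ((Δk M a y : ℝ) : ℂ)^2)) x = F2 M a m x := by
  have hne : Dl M a x ≠ 0 := Complex.ofReal_ne_zero.mpr hx
  have hev : Dop M a m (fun y => ((Δk M a y : ℝ) : ℂ)^2) =ᶠ[nhds x] F1 M a m :=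
    Filter.eventuallyEq_of_mem ((isOpen_ne M a).mem_nhds hx) (fun y hy => step1 M a m y hy)
  rw [Dop_apply, hev.deriv_eq, (hasDerivAt_F1 M a m x).deriv, step1 M a m x hx]
  simp only [F1, F2]
  field_simp
  ring

lemma step3 (M a : ℝ) (m : ℤ) (x : ℝ) (hx : Δk M a x ≠ 0) :
    Dop M a m (Dop M a m (Dop M a m (fun y => ((Δk M a y : ℝ) : ℂ)^2))) x
      = F3 M a m x := by
  have hne : Dl M a x ≠ 0 := Complex.ofReal_ne_zero.mpr hx
  have hev : Dop M a m (Dop M a m (fun y => ((Δk M a y : ℝ) : ℂ)^2)) =ᶠ[nhds x] F2 M a m :=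
    Filter.eventuallyEq_of_mem ((isOpen_ne M a).mem_nhds hx) (fun y hy => step2 M a m y hy)
  rw [Dop_apply, hev.deriv_eq, (hasDerivAt_F2 M a m x).deriv, step2 M a m x hx]
  simp only [F3]
  ring

lemma final_alg (M a : ℝ) (m : ℤ) (r : ℝ) (hr : Δk M a r ≠ 0) :
    ((Δk M a r : ℝ) : ℂ)^2 *
      ((24 + (Cc a m * (12*(2*(r:ℂ)-2*M) + 6*Cc a m) * Dl M a r
        - Cc a m * F2 M a m r * (2*(r:ℂ)-2*M)) / (Dl M a r)^2)
       + (Cc a m / Dl M a r) * F3 M a m r) = 24 * Am M a m r := by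
  have hne : ((Δk M a r : ℝ) : ℂ) ≠ 0 := Complex.ofReal_ne_zero.mpr hr
  have hD : ((Δk M a r : ℝ) : ℂ) = (r:ℂ)^2 - 2*M*r + a^2 := by
    simp only [Δk]; push_cast; ring
  have h1 : ((Δk M a r : ℝ) : ℂ)^2 *
      ((24 + (Cc a m * (12*(2*(r:ℂ)-2*M) + 6*Cc a m) * Dl M a r
        - Cc a m * F2 M a m r * (2*(r:ℂ)-2*M)) / (Dl M a r)^2)
       + (Cc a m / Dl M a r) * F3 M a m r)
      = 24*(Dl M a r)^2
        + (Cc a m*(12*(2*(r:ℂ)-2*M)+6*Cc a m)*Dl M a r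
            - Cc a m*F2 M a m r*(2*(r:ℂ)-2*M))
        + Cc a m*(12*(2*(r:ℂ)-2*M)+6*Cc a m)*Dl M a r
        + (Cc a m)^2*F2 M a m r := by
    simp only [F3, Dl]
    field_simp
    ring
  rw [h1]
  simp only [F2, Dl, Cc, Am, Δk]
  push_cast
  linear_combination (64*(a:ℂ)^2*(m:ℂ)^2*((r:ℂ)^2-2*M*r+a^2)
    - 16*(a:ℂ)^2*(m:ℂ)^2*((r:ℂ)-M)^2
    + 32*Complex.I*(a:ℂ)^3*(m:ℂ)^3*((r:ℂ)-M)
    + 16*(a:ℂ)^4*(m:ℂ)^4*Complex.I^2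
    - 16*(a:ℂ)^4*(m:ℂ)^4) * Complex.I_sq

end T14

/-- **`Δ²·D⁴(Δ²) = 24·A_m` wherever `Δ ≠ 0`.** -/
theorem stmt_14 (M a : ℝ) (m : ℤ) :
    ∀ r : ℝ, Δk M a r ≠ 0 →
      ((Δk M a r : ℝ) : ℂ)^2 *
        Dop M a m (Dop M a m (Dop M a m (Dop M a m
          (fun x => ((Δk M a x : ℝ) : ℂ)^2)))) r
      = 24 * Am M a m r := by
  intro r hr
  have hev3 : Dop M a m (Dop M a m (Dop M a m (fun x => ((Δk M a x : ℝ) : ℂ)^2)))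
      =ᶠ[nhds r] T14.F3 M a m :=
    Filter.eventuallyEq_of_mem ((T14.isOpen_ne M a).mem_nhds hr)
      (fun y hy => T14.step3 M a m y hy)
  rw [T14.Dop_apply, hev3.deriv_eq, (T14.hasDerivAt_F3 M a m r hr).deriv,
    T14.step3 M a m r hr]
  exact T14.final_alg M a m r hr
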